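/- Let F be a rank-2 real 3×3 matrix with left kernel spanned by e (i.e. eᵀ F = 0, e ≠ 0). Then the cameras P₁ = [[e]ₓ F | e] and P₂ = [I | 0] are full rank и and their fundamental matrix is proportional to F, i.e. P₁ᵀ F P₂ is skew-symmetric. -/

import Mathlib

open Matrix

/-- The skew-symmetric (cross-product) matrix of a vector `t ∈ ℝ³`. -/
def skewMat (t : Fin 3 → ℝ) : Matrix (Fin 3) (Fin 3) ℝ :=
  !![0, -t 2, t 1; t 2, 0, -t 0; -t 1, t 0, 0]

/-- `[A | b]`: the 3×4 matrix with left 3×3 block `A` and last column `b`. -/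
def aug (A : Matrix (Fin 3) (Fin 3) ℝ) (b : Fin 3 → ℝ) : Matrix (Fin 3) (Fin 4) ℝ :=
  Matrix.of fun i j => if h : (j : ℕ) < 3 then A i ⟨j, h⟩ else b i

lemma rank3_of_inj (A : Matrix (Fin 3) (Fin 4) ℝ)
    (h : ∀ x : Fin 3 → ℝ, vecMul x A = 0 → x = 0) : A.rank = 3 := by
  rw [← Matrix.rank_transpose, Matrix.rank]
  have hinj : Function.Injective Aᵀ.mulVecLin := by
    rw [← LinearMap.ker_eq_bot, LinearMap.ker_eq_bot']
    intro x hx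
    exact h x (by simpa [Matrix.mulVecLin_apply, Matrix.mulVec_transpose] using hx)
  rw [LinearMap.finrank_range_of_inj hinj]
  simp

lemma ker_fin (F : Matrix (Fin 3) (Fin 3) ℝ) (hrank : F.rank = 2) :
    Module.finrank ℝ (LinearMap.ker (Fᵀ).mulVecLin) = 1 := by
  have h1 := (Fᵀ).mulVecLin.finrank_range_add_finrank_ker
  have h2 : Fᵀ.rank = 2 := by rw [Matrix.rank_transpose]; exact hrank
  rw [Matrix.rank] at h2
  rw [h2] at h1
  simp at h1
  omega

lemma ker_span (F : Matrix (Fin 3) (Fin 3) ℝ) (hrank : F.rank = 2)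
    (e : Fin 3 → ℝ) (he : e ≠ 0) (heF : vecMul e F = 0)
    (w : Fin 3 → ℝ) (hw : vecMul w F = 0) : ∃ c : ℝ, w = c • e := by
  have hmem : ∀ v : Fin 3 → ℝ, v ∈ LinearMap.ker (Fᵀ).mulVecLin ↔ vecMul v F = 0 := by
    intro v; simp [Matrix.mulVecLin_apply, Matrix.mulVec_transpose]
  have hle : Submodule.span ℝ {e} ≤ LinearMap.ker (Fᵀ).mulVecLin :=
    Submodule.span_le.mpr (by simp [hmem, heF])
  have hsp : Module.finrank ℝ (Submodule.span ℝ {e}) = 1 := finrank_span_singleton he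
  have heq : Submodule.span ℝ {e} = LinearMap.ker (Fᵀ).mulVecLin := by
    apply Submodule.eq_of_le_of_finrank_le hle
    rw [ker_fin F hrank, hsp]
  have : w ∈ Submodule.span ℝ {e} := heq ▸ (hmem w).mpr hw
  obtain ⟨c, hc⟩ := Submodule.mem_span_singleton.mp this
  exact ⟨c, hc.symm⟩

lemma fin3_mk_two (h : 2 < 3) : (⟨2, h⟩ : Fin 3) = 2 := rfl
lemma fin3_mk_one (h : 1 < 3) : (⟨1, h⟩ : Fin 3) = 1 := rfl
lemma fin3_mk_zero (h : 0 < 3) : (⟨0, h⟩ : Fin 3) = 0 := rfl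

lemma vecMul_aug (A : Matrix (Fin 3) (Fin 3) ℝ) (b x : Fin 3 → ℝ)
    (hx : vecMul x (aug A b) = 0) : vecMul x A = 0 ∧ x ⬝ᵥ b = 0 := by
  constructor
  · funext j
    have := congrFun hx ⟨(j : ℕ), by omega⟩
    simpa [vecMul, dotProduct, aug] using this
  · have := congrFun hx 3
    simpa [vecMul, dotProduct, aug] using this

/-- For a rank-2 matrix  with left kernel spanned by , the cameras
,  are full rank and have fundamental matrix
proportional to , i.e.  is skew-symmetric. -/
theorem canonical_cameras (F : Matrix (Fin 3) (Fin 3) ℝ) (hrank : F.rank = 2)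
    (e : Fin 3 → ℝ) (he : e ≠ 0) (heF : vecMul e F = 0) :
    (aug (skewMat e * F) e).rank = 3 ∧ (aug (1 : Matrix (Fin 3) (Fin 3) ℝ) 0).rank = 3 ∧
      ((aug (skewMat e * F) e)ᵀ * F * aug (1 : Matrix (Fin 3) (Fin 3) ℝ) 0)ᵀ =
        -((aug (skewMat e * F) e)ᵀ * F * aug (1 : Matrix (Fin 3) (Fin 3) ℝ) 0) := by
  have hee : e ⬝ᵥ e ≠ 0 := fun h => he (dotProduct_self_eq_zero.mp h)
  have hee' : e 0 * e 0 + e 1 * e 1 + e 2 * e 2 ≠ 0 := by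
    simpa [dotProduct, Fin.sum_univ_three] using hee
  refine ⟨?_, ?_, ?_⟩
  · apply rank3_of_inj
    intro x hx
    obtain ⟨hA, hb⟩ := vecMul_aug _ _ _ hx
    rw [← Matrix.vecMul_vecMul] at hA
    obtain ⟨c, hc⟩ := ker_span F hrank e he heF _ hA
    have hwe : vecMul x (skewMat e) ⬝ᵥ e = 0 := by
      simp [vecMul, dotProduct, skewMat, Fin.sum_univ_three]
      ring
    rw [hc, smul_dotProduct, smul_eq_mul] at hwe
    have hc0 : c = 0 := by
      rcases mul_eq_zero.mp hwe with h | h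
      · exact h
      · exact absurd h hee
    rw [hc0, zero_smul] at hc
    have g0 := congrFun hc 0
    have g1 := congrFun hc 1
    have g2 := congrFun hc 2
    simp [vecMul, dotProduct, skewMat, Fin.sum_univ_three] at g0 g1 g2
    simp [dotProduct, Fin.sum_univ_three] at hb
    have k0 : x 0 = 0 := by
      rcases mul_eq_zero.mp (show x 0 * (e 0 * e 0 + e 1 * e 1 + e 2 * e 2) = 0 by
        linear_combination e 0 * hb + e 1 * g2 - e 2 * g1) with h | h
      · exact h
      · exact absurd h hee'
    have k1 : x 1 = 0 := by
      rcases mul_eq_zero.mp (show x 1 * (e 0 * e 0 + e 1 * e 1 + e 2 * e 2) = 0 by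
        linear_combination e 1 * hb - e 0 * g2 + e 2 * g0) with h | h
      · exact h
      · exact absurd h hee'
    have k2 : x 2 = 0 := by
      rcases mul_eq_zero.mp (show x 2 * (e 0 * e 0 + e 1 * e 1 + e 2 * e 2) = 0 by
        linear_combination e 2 * hb + e 0 * g1 - e 1 * g0) with h | h
      · exact h
      · exact absurd h hee'
    funext i
    fin_cases i
    · exact k0
    · exact k1
    · exact k2
  · apply rank3_of_inj
    intro x hx
    obtain ⟨hA, _⟩ := vecMul_aug _ _ _ hx
    simpa using hA
  · have hF0 := congrFun heF 0
    have hF1 := congrFun heF 1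
    have hF2 := congrFun heF 2
    simp [vecMul, dotProduct, Fin.sum_univ_three] at hF0 hF1 hF2
    ext i j
    fin_cases i <;> fin_cases j <;>
      norm_num [aug, skewMat, Matrix.mul_apply, Matrix.one_apply,
        fin3_mk_zero, fin3_mk_one, fin3_mk_two,
        Fin.sum_univ_three, Fin.sum_univ_four, Matrix.cons_val_two, Matrix.tail_cons, Matrix.head_cons] <;>
      first
        | ring1
        | linear_combination hF0
        | linear_combination hF1
        | linear_combination hF2
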